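/- For r ≥ 0, let w₀(r) := η₀(r) + 2r²/(1+r²) - η₀(r)²/2 + ((1-r²)/(1+r²)) ∫₁^{1+r²} (ln t)/(1-t) dt, where η₀(r) = -ln(1+r²). Then w₀ is a radial solution of -Δw₀ = 4e^{2η₀}(η₀ + η₀² + 2w₀) on ℝ² with w₀(0) = 0 and w₀'(0) = 0. -/

import Mathlib

open MeasureTheory Real

noncomputable section

abbrev E2 := EuclideanSpace ℝ (Fin 2)

/-- The Euclidean Laplacian of `f : ℝ² → ℝ`, as sum of second directional derivatives. -/
def lap (f : E2 → ℝ) (x : E2) : ℝ :=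
  ∑ i : Fin 2, deriv (deriv (fun t : ℝ => f (x + t • (EuclideanSpace.single i (1:ℝ))))) 0

/-- The standard Liouville bubble `η₀(x) = -ln(1+|x|²)`. -/
def eta0 (x : E2) : ℝ := -Real.log (1 + ‖x‖^2)

/-- The radial profile `η₀(r) = -ln(1+r²)`. -/
def eta0r (r : ℝ) : ℝ := -Real.log (1 + r^2)

/-- The radial function `w₀`. -/
def W0 (r : ℝ) : ℝ :=
  eta0r r + 2*r^2/(1+r^2) - (eta0r r)^2/2
    + ((1-r^2)/(1+r^2)) * ∫ t in (1:ℝ)..(1+r^2), Real.log t / (1-t)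



/-- continuous extension of `log t / (1-t)` -/
def Gf (t : ℝ) : ℝ := if t = 1 then -1 else Real.log t / (1 - t)

def Gd (t : ℝ) : ℝ := if t = 1 then 1/2 else ((1-t)/t + Real.log t)/(1-t)^2

def Jf (x : ℝ) : ℝ := ∫ t in (1:ℝ)..x, Gf t

lemma hG_one : HasDerivAt Gf (1/2) 1 := by
  rw [hasDerivAt_iff_isLittleO]
  have h1 : (fun t : ℝ => (t-1)^2) =o[nhds 1] (fun t => t - 1) := by
    rw [Asymptotics.isLittleO_iff]
    intro c hc
    filter_upwards [Metric.closedBall_mem_nhds (1:ℝ) hc] with t ht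
    rw [Metric.mem_closedBall, Real.dist_eq] at ht
    simp only [Real.norm_eq_abs]
    have h2 : |(t-1)^2| = |t-1| * |t-1| := by
      rw [abs_of_nonneg (sq_nonneg _), sq]; exact (abs_mul_abs_self _).symm
    rw [h2]
    exact mul_le_mul_of_nonneg_right ht (abs_nonneg _)
  have h2 : (fun t : ℝ => Gf t - Gf 1 - (t - 1) * (1/2)) =O[nhds 1] (fun t => (t-1)^2) := by
    rw [Asymptotics.isBigO_iff]
    refine ⟨2, ?_⟩
    filter_upwards [Metric.ball_mem_nhds (1:ℝ) one_half_pos] with t ht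
    rw [Metric.mem_ball, Real.dist_eq] at ht
    simp only [Real.norm_eq_abs]
    rcases eq_or_ne t 1 with rfl | htne
    · simp [Gf]
    · have hu : (1:ℝ) - t ≠ 0 := by
        intro h; apply htne; linarith
      have habs : |1 - t| < 1/2 := by rw [abs_sub_comm]; exact ht
      have key := Real.abs_log_sub_add_sum_range_le (x := 1 - t) (by linarith) 2
      have hsum : (∑ i ∈ Finset.range 2, (1-t) ^ (i + 1) / (i + 1)) = (1-t) + (1-t)^2/2 := by
        norm_num [Finset.sum_range_succ]
      rw [hsum] at key
      have hlog : Real.log (1 - (1-t)) = Real.log t := by ring_nf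
      rw [hlog] at key
      -- key : |(1-t) + (1-t)^2/2 + log t| ≤ |1-t|^3 / (1 - |1-t|)
      have hrw : Gf t - Gf 1 - (t-1) * (1/2) = ((1-t) + (1-t)^2/2 + Real.log t) / (1-t) := by
        rw [Gf, if_neg htne, Gf, if_pos rfl]
        field_simp
        ring
      rw [hrw, abs_div]
      have hupos : 0 < |1 - t| := abs_pos.2 hu
      rw [div_le_iff₀ hupos]
      have h3 : |1-t|^3 / (1 - |1-t|) ≤ 2 * |1-t|^3 := by
        rw [div_le_iff₀ (by linarith)]
        nlinarith [pow_pos hupos 3]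
      have h4 : |(t-1)^2| = |1-t|^2 := by
        rw [show (t-1)^2 = (1-t)^2 by ring, abs_pow]
      rw [h4]
      nlinarith [key, h3, pow_pos hupos 3]
  simpa using h2.trans_isLittleO h1

lemma hG_deriv {t : ℝ} (ht0 : 0 < t) : HasDerivAt Gf (Gd t) t := by
  rcases eq_or_ne t 1 with rfl | htne
  · simpa [Gd] using hG_one
  · have hu : (1:ℝ) - t ≠ 0 := fun h => htne (by linarith)
    have h1 : HasDerivAt (fun u : ℝ => Real.log u / (1 - u))
        ((t⁻¹ * (1 - t) - Real.log t * (-1)) / (1 - t)^2) t :=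
      (Real.hasDerivAt_log ht0.ne').div ((hasDerivAt_id t).const_sub 1) hu
    have h2 : HasDerivAt Gf ((t⁻¹ * (1 - t) - Real.log t * (-1)) / (1 - t)^2) t := by
      apply h1.congr_of_eventuallyEq
      filter_upwards [compl_singleton_mem_nhds htne] with u hu'
      rw [Gf, if_neg (by simpa using hu')]
    have : Gd t = (t⁻¹ * (1 - t) - Real.log t * (-1)) / (1 - t)^2 := by
      rw [Gd, if_neg htne]
      field_simp
      ring
    rw [this]
    exact h2

lemma measurable_Gf : Measurable Gf :=
  Measurable.ite (measurableSet_eq) measurable_const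
    (Real.measurable_log.div (measurable_const.sub measurable_id))

lemma hJ_deriv {x : ℝ} (hx : 0 < x) : HasDerivAt Jf (Gf x) x := by
  apply intervalIntegral.integral_hasDerivAt_right
  · apply ContinuousOn.intervalIntegrable
    intro u hu
    have hu0 : 0 < u := by
      rcases Set.mem_uIcc.1 hu with ⟨h1, _⟩ | ⟨h1, _⟩ <;> linarith
    exact ((hG_deriv hu0).continuousAt).continuousWithinAt
  · exact ⟨Set.univ, Filter.univ_mem, measurable_Gf.aestronglyMeasurable⟩
  · exact (hG_deriv hx).continuousAt

def Ff (s : ℝ) : ℝ :=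
  -Real.log (1+s) + 2*s/(1+s) - (Real.log (1+s))^2/2 + ((1-s)/(1+s)) * Jf (1+s)

def F1 (s : ℝ) : ℝ :=
  -1/(1+s) + 2/(1+s)^2 - Real.log (1+s)/(1+s) - 2/(1+s)^2 * Jf (1+s)
    + (1-s)/(1+s) * Gf (1+s)

def F2 (s : ℝ) : ℝ :=
  1/(1+s)^2 - 4/(1+s)^3 + (Real.log (1+s) - 1)/(1+s)^2 + 4/(1+s)^3 * Jf (1+s)
    - 4/(1+s)^2 * Gf (1+s) + (1-s)/(1+s) * Gd (1+s)

lemma one_add_hasDerivAt (s : ℝ) : HasDerivAt (fun u : ℝ => 1 + u) 1 s :=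
  (hasDerivAt_id s).const_add 1

lemma hL_deriv {s : ℝ} (hs : -1 < s) :
    HasDerivAt (fun u : ℝ => Real.log (1+u)) (1/(1+s)) s := by
  have h1 : (1:ℝ) + s ≠ 0 := by linarith
  have := (Real.hasDerivAt_log h1).comp s (one_add_hasDerivAt s)
  exact this.congr_deriv (by simp [one_div])

lemma hJ1_deriv {s : ℝ} (hs : -1 < s) :
    HasDerivAt (fun u : ℝ => Jf (1+u)) (Gf (1+s)) s := by
  have := (hJ_deriv (x := 1+s) (by linarith)).comp s (one_add_hasDerivAt s)
  exact this.congr_deriv (by simp)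

lemma hG1_deriv {s : ℝ} (hs : -1 < s) :
    HasDerivAt (fun u : ℝ => Gf (1+u)) (Gd (1+s)) s := by
  have := (hG_deriv (t := 1+s) (by linarith)).comp s (one_add_hasDerivAt s)
  exact this.congr_deriv (by simp)

lemma hF_deriv {s : ℝ} (hs : -1 < s) : HasDerivAt Ff (F1 s) s := by
  have h1 : (1:ℝ) + s ≠ 0 := by linarith
  have hL := hL_deriv hs
  have hA : HasDerivAt (fun u : ℝ => 2*u/(1+u))
      ((2*1*(1+s) - 2*s*1)/(1+s)^2) s :=
    ((hasDerivAt_id' (x := s)).const_mul 2).div (one_add_hasDerivAt s) h1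
  have hB : HasDerivAt (fun u : ℝ => (1-u)/(1+u))
      ((-1*(1+s) - (1-s)*1)/(1+s)^2) s :=
    ((hasDerivAt_id' (x := s)).const_sub 1).div (one_add_hasDerivAt s) h1
  have H := ((hL.neg.add hA).sub ((hL.pow 2).div_const 2)).add (hB.mul (hJ1_deriv hs))
  have H2 : HasDerivAt Ff _ s := H
  convert H2 using 1
  rw [F1]
  push_cast
  field_simp
  ring

lemma hF1_deriv {s : ℝ} (hs : -1 < s) : HasDerivAt F1 (F2 s) s := by
  have h1 : (1:ℝ) + s ≠ 0 := by linarith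
  have h1sq : ((1:ℝ)+s)^2 ≠ 0 := pow_ne_zero _ h1
  have hL := hL_deriv hs
  have hone := one_add_hasDerivAt s
  have hsq : HasDerivAt (fun u : ℝ => (1+u)^2) (2*(1+s)) s := by
    have := hone.pow 2
    exact this.congr_deriv (by simp)
  have hT1 : HasDerivAt (fun u : ℝ => -1/(1+u)) ((0*(1+s) - (-1)*1)/(1+s)^2) s :=
    (hasDerivAt_const s (-1:ℝ)).div hone h1
  have hT2 : HasDerivAt (fun u : ℝ => 2/(1+u)^2) ((0*(1+s)^2 - 2*(2*(1+s)))/((1+s)^2)^2) s :=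
    (hasDerivAt_const s (2:ℝ)).div hsq h1sq
  have hT3 : HasDerivAt (fun u : ℝ => Real.log (1+u)/(1+u))
      ((1/(1+s)*(1+s) - Real.log (1+s)*1)/(1+s)^2) s := hL.div hone h1
  have hT4 := hT2.mul (hJ1_deriv hs)
  have hB : HasDerivAt (fun u : ℝ => (1-u)/(1+u))
      ((-1*(1+s) - (1-s)*1)/(1+s)^2) s :=
    ((hasDerivAt_id' (x := s)).const_sub 1).div hone h1
  have hT5 := hB.mul (hG1_deriv hs)
  have H := (((hT1.add hT2).sub hT3).sub hT4).add hT5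
  have H2 : HasDerivAt F1 _ s := H
  convert H2 using 1
  rw [F2]
  field_simp
  ring

lemma Jf_one : Jf 1 = 0 := intervalIntegral.integral_same

lemma Ff_zero : Ff 0 = 0 := by
  simp [Ff, Jf_one]

lemma key_identity {s : ℝ} (hs : 0 ≤ s) :
    s * F2 s + F1 s
      = -(1/(1+s)^2 * (-(Real.log (1+s)) + (Real.log (1+s))^2 + 2 * Ff s)) := by
  rcases eq_or_lt_of_le hs with h | h
  · subst h
    simp [F1, Ff, Jf_one, Gf]
    norm_num
  · have h1 : (1:ℝ) + s ≠ 0 := by linarith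
    have hne : (1:ℝ) + s ≠ 1 := by linarith
    have hs0 : s ≠ 0 := ne_of_gt h
    have hG : Gf (1+s) = Real.log (1+s) / (-s) := by
      rw [Gf, if_neg hne]; ring_nf
    have hGd : Gd (1+s) = ((-s)/(1+s) + Real.log (1+s))/s^2 := by
      rw [Gd, if_neg hne]; ring_nf
    rw [F1, F2, Ff, hG, hGd]
    field_simp
    ring

lemma integral_eq (x : ℝ) :
    (∫ t in (1:ℝ)..x, Real.log t / (1-t)) = Jf x := by
  apply intervalIntegral.integral_congr_ae
  have h : ∀ᵐ t : ℝ, Real.log t / (1-t) = Gf t := by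
    rw [MeasureTheory.ae_iff]
    refine measure_mono_null ?_ (measure_singleton (1:ℝ))
    intro t ht
    simp only [Set.mem_setOf_eq] at ht
    simp only [Set.mem_singleton_iff]
    by_contra h2
    exact ht (by rw [Gf, if_neg h2])
  exact h.mono fun t ht _ => ht

lemma W0_eq (r : ℝ) : W0 r = Ff (r^2) := by
  rw [W0, eta0r, integral_eq, Ff]
  ring

lemma norm_sq_add (x : E2) (i : Fin 2) (t : ℝ) :
    ‖x + t • EuclideanSpace.single i (1:ℝ)‖^2 = ‖x‖^2 + 2 * x i * t + t^2 := by
  rw [norm_add_sq_real]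
  have h1 : inner ℝ x (t • EuclideanSpace.single i (1:ℝ)) = t * x i := by
    rw [real_inner_smul_right, EuclideanSpace.inner_single_right]
    simp [mul_comm]
  have h2 : ‖t • EuclideanSpace.single i (1:ℝ)‖^2 = t^2 := by
    rw [norm_smul]
    simp [EuclideanSpace.norm_single, sq_abs]
  rw [h1, h2]
  ring

lemma norm_sq_sum (x : E2) : x 0^2 + x 1^2 = ‖x‖^2 := by
  rw [EuclideanSpace.norm_eq, Real.sq_sqrt (by positivity)]
  simp [Fin.sum_univ_two, sq_abs]

lemma second_deriv (x : E2) (i : Fin 2) :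
    deriv (deriv (fun t : ℝ => W0 ‖x + t • EuclideanSpace.single i (1:ℝ)‖)) 0
      = F2 (‖x‖^2) * (2*x i) * (2*x i) + F1 (‖x‖^2) * 2 := by
  set s := ‖x‖^2 with hsdef
  have hq : ∀ t : ℝ, (0:ℝ) ≤ s + 2 * x i * t + t^2 := fun t => by
    rw [← norm_sq_add x i t]; positivity
  have hin : ∀ t : ℝ, HasDerivAt (fun u : ℝ => s + 2*x i*u + u^2) (2*x i + 2*t) t := by
    intro t
    have h := (((hasDerivAt_id' (x := t)).const_mul (2*x i)).const_add s).add
      (hasDerivAt_pow 2 t)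
    refine h.congr_deriv ?_
    push_cast
    norm_num
  have hfun : (fun t : ℝ => W0 ‖x + t • EuclideanSpace.single i (1:ℝ)‖)
      = fun t => Ff (s + 2*x i*t + t^2) := by
    funext u; rw [W0_eq, norm_sq_add]
  have hd1 : deriv (fun t : ℝ => W0 ‖x + t • EuclideanSpace.single i (1:ℝ)‖)
      = fun t => F1 (s + 2*x i*t + t^2) * (2*x i + 2*t) := by
    rw [hfun]
    funext t
    exact ((hF_deriv (by linarith [hq t])).comp t (hin t)).deriv
  rw [hd1]
  have hc : HasDerivAt (fun t : ℝ => F1 (s + 2*x i*t + t^2))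
      (F2 (s + 2*x i*0 + 0^2) * (2*x i + 2*0)) 0 :=
    (hF1_deriv (by linarith [hq 0])).comp 0 (hin 0)
  have hlin : HasDerivAt (fun t : ℝ => 2*x i + 2*t) 2 0 := by
    have := ((hasDerivAt_id' (x := (0:ℝ))).const_mul 2).const_add (2*x i)
    simpa using this
  have := (hc.mul hlin).deriv
  erw [this]
  norm_num

theorem stmt2 :
    (∀ x : E2, -lap (fun y => W0 ‖y‖) x
        = 4 * Real.exp (2 * eta0 x) * (eta0 x + (eta0 x)^2 + 2 * W0 ‖x‖))
      ∧ W0 0 = 0 ∧ deriv W0 0 = 0 := by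
  refine ⟨?_, ?_, ?_⟩
  · intro x
    have hs0 : (0:ℝ) ≤ ‖x‖^2 := sq_nonneg _
    have h1 : (0:ℝ) < 1 + ‖x‖^2 := by linarith
    have hlap : lap (fun y => W0 ‖y‖) x
        = F2 (‖x‖^2) * (2*x 0) * (2*x 0) + F1 (‖x‖^2) * 2
          + (F2 (‖x‖^2) * (2*x 1) * (2*x 1) + F1 (‖x‖^2) * 2) := by
      rw [lap, Fin.sum_univ_two, second_deriv x 0, second_deriv x 1]
    have hexp : Real.exp (2 * eta0 x) = 1/(1 + ‖x‖^2)^2 := by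
      rw [eta0, mul_neg, Real.exp_neg,
        show (2:ℝ) * Real.log (1 + ‖x‖^2) = Real.log ((1 + ‖x‖^2)^2) by
          rw [Real.log_pow]; push_cast; ring,
        Real.exp_log (by positivity)]
      rw [one_div]
    rw [hlap, hexp, eta0, W0_eq]
    have hk := key_identity hs0
    have hx2 := norm_sq_sum x
    linear_combination (-4 : ℝ) * hk + (-4 * F2 (‖x‖^2)) * hx2
  · rw [W0_eq]
    norm_num [Ff_zero]
  · have hW : W0 = fun r => Ff (r^2) := funext W0_eq
    rw [hW]
    have h : HasDerivAt (fun r : ℝ => Ff (r^2)) (F1 ((0:ℝ)^2) * (((2:ℕ):ℝ) * (0:ℝ) ^ (2-1))) 0 :=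
      (hF_deriv (s := (0:ℝ)^2) (by norm_num)).comp (h := fun x : ℝ => x ^ 2) 0 (hasDerivAt_pow 2 (0:ℝ))
    rw [h.deriv]
    norm_num
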